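/- Let h : ℝⁿ → ℝ be convex and absolutely homogeneous, let x ∈ ℝⁿ with ‖x‖ = 1, v ∈ ℝⁿ with ⟨x, v⟩ = 0, G ∈ ℝⁿ, and t > 0. Suppose there exists ξ ∈ ℝⁿ which is a subgradient of h at x + v (i.e. h(y) ≥ h(x+v) + ⟨ξ, y − (x+v)⟩ for all y) such that G + (1/t) • v + (ξ − ⟨x, ξ⟩ • x) = 0 (the first-order condition of the tangent-space proximal subproblem, with ξ orthogonally projected onto T_x S). Then h((x + v)/‖x + v‖) ≤ h(x) + ⟨−G − (1/t) • v, v⟩. -/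

import Mathlib

open RealInnerProductSpace

/-- Key inequality for the non-smooth part: if some subgradient `ξ` of `h` at `x + v`
satisfies the first-order condition `G + (1/t) • v + (ξ − ⟨x, ξ⟩ • x) = 0` of the
tangent-space proximal subproblem, then
`h((x+v)/‖x+v‖) ≤ h(x) + ⟨−G − (1/t) • v, v⟩`. -/
theorem h_descent_inequality {n : ℕ} (h : EuclideanSpace ℝ (Fin n) → ℝ)
    (hconv : ConvexOn ℝ Set.univ h)
    (hhom : ∀ (α : ℝ) (x : EuclideanSpace ℝ (Fin n)), h (α • x) = |α| * h x)
    (x v G : EuclideanSpace ℝ (Fin n)) (hx : ‖x‖ = 1) (hxv : ⟪x, v⟫ = 0)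
    (t : ℝ) (ht : 0 < t)
    (hξ : ∃ ξ : EuclideanSpace ℝ (Fin n),
      (∀ y, h (x + v) + ⟪ξ, y - (x + v)⟫ ≤ h y) ∧
      G + (1/t) • v + (ξ - ⟪x, ξ⟫ • x) = 0) :
    h (‖x + v‖⁻¹ • (x + v)) ≤ h x + ⟪-G - (1/t) • v, v⟫ := by
  obtain ⟨ξ, hsub, hfoc⟩ := hξ
  -- h is nonnegative
  have h0 : h 0 = 0 := by
    have := hhom 0 0; simpa using this
  have hnonneg : ∀ y, 0 ≤ h y := by
    intro y
    have hc := hconv.2 (Set.mem_univ y) (Set.mem_univ (-y))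
      (by norm_num : (0:ℝ) ≤ (1:ℝ)/2) (by norm_num : (0:ℝ) ≤ (1:ℝ)/2) (by norm_num)
    have hneg : h (-y) = h y := by
      have := hhom (-1) y; simpa using this
    have : h ((1/2 : ℝ) • y + (1/2 : ℝ) • (-y)) ≤ (1/2) * h y + (1/2) * h (-y) := by
      simpa [smul_smul] using hc
    rw [hneg] at this
    have hz : (1/2 : ℝ) • y + (1/2 : ℝ) • (-y) = 0 := by
      simp [smul_neg]
    rw [hz, h0] at this
    linarith
  -- ‖x+v‖ ≥ 1
  have hnorm : 1 ≤ ‖x + v‖ := by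
    have hsq : ‖x + v‖ ^ 2 = ‖x‖ ^ 2 + 2 * ⟪x, v⟫ + ‖v‖ ^ 2 := by
      rw [← real_inner_self_eq_norm_sq, ← real_inner_self_eq_norm_sq,
        ← real_inner_self_eq_norm_sq]
      simp only [inner_add_add_self, real_inner_comm x v]
      ring
    have : (1:ℝ) ^ 2 ≤ ‖x + v‖ ^ 2 := by
      rw [hsq, hx, hxv]
      have : 0 ≤ ‖v‖ ^ 2 := sq_nonneg _
      nlinarith
    have hn : (0:ℝ) ≤ ‖x + v‖ := norm_nonneg _
    nlinarith
  -- scaling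
  have hscale : h (‖x + v‖⁻¹ • (x + v)) ≤ h (x + v) := by
    rw [hhom]
    have hpos : 0 < ‖x + v‖ := lt_of_lt_of_le one_pos hnorm
    rw [abs_of_nonneg (by positivity)]
    have hle : ‖x + v‖⁻¹ ≤ 1 := by
      rw [inv_le_one_iff₀]; right; exact hnorm
    nlinarith [hnonneg (x + v)]
  -- subgradient at y = x
  have hsg : h (x + v) ≤ h x + ⟪ξ, v⟫ := by
    have := hsub x
    have hxx : x - (x + v) = -v := by abel
    rw [hxx, inner_neg_right] at this
    linarith
  -- identify ⟪ξ, v⟫ from the FOC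
  have hkey : ⟪ξ, v⟫ = ⟪-G - (1/t) • v, v⟫ := by
    have heq : ξ - ⟪x, ξ⟫ • x = -G - (1/t) • v := by
      have h1 := eq_neg_of_add_eq_zero_right hfoc
      rw [h1]; abel
    have := congrArg (fun z => ⟪z, v⟫) heq
    simp only [inner_sub_left, real_inner_smul_left, hxv, mul_zero, sub_zero] at this
    rw [this, inner_sub_left, real_inner_smul_left]
  calc h (‖x + v‖⁻¹ • (x + v)) ≤ h (x + v) := hscale
    _ ≤ h x + ⟪ξ, v⟫ := hsg
    _ = h x + ⟪-G - (1/t) • v, v⟫ := by rw [hkey]
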